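/- Let 𝔛 be a regular semistable model over a DVR R of a smooth curve X, with dual graph G of the special fiber. The specialization map rho restricted to vertical divisors (divisors supported on the special fiber) surjects onto Prin(G), and rho maps Prin(X) surjectively onto Prin(G). -/

import Mathlib

/-- The divisor-theoretic data of a regular semistable model `𝔛` over a DVR `R`
(with fraction field `K` and residue field `k`) of a smooth curve `X/K`:
* `V` indexes the irreducible components `C i` of the special fiber `𝔛ₖ`
  (the vertices of the dual graph `G`);
* `E` indexes the nodes of `𝔛ₖ` (the edges of `G`), with endpoints `ends e` and
  weights `edgeMult e = [k(p) : k]`;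
* `PtX` is the set of closed points of `X` (equivalently, of horizontal prime
  divisors on `𝔛`), with degrees `ptDeg x = [k(x) : K]`;
* a divisor on `𝔛` is written uniquely as a horizontal plus a vertical divisor,
  i.e. as a pair in `(PtX →₀ ℤ) × (V → ℤ)`;
* `pair i D = C i · D = deg (𝒪_𝔛(D)|_{C i})` is the intersection pairing;
* `Prin` is the group of principal divisors on `𝔛` (divisors of rational
  functions); its image under the first projection is `Prin(X)`, identifying a
  divisor on `X` with its Zariski closure, since the horizontal part of
  `div_𝔛(f)` is the closure of `div_X(f)`. -/
structure ModelData (V E PtX : Type) [Fintype V] [Fintype E] where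
  ends : E → V × V
  edgeMult : E → ℕ
  edgeMult_pos : ∀ e, 0 < edgeMult e
  ptDeg : PtX → ℕ
  ptDeg_pos : ∀ x, 0 < ptDeg x
  pair : V → ((PtX →₀ ℤ) × (V → ℤ)) →+ ℤ
  Prin : AddSubgroup ((PtX →₀ ℤ) × (V → ℤ))

namespace ModelData

variable {V E PtX : Type} [Fintype V] [Fintype E] [DecidableEq V]

/-- The specialization map `ρ(D) = ∑ᵢ (C i · D)[C i]`. -/
noncomputable def rho (M : ModelData V E PtX) : ((PtX →₀ ℤ) × (V → ℤ)) →+ (V → ℤ) where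
  toFun D := fun i => M.pair i D
  map_zero' := by funext i; simp
  map_add' D D' := by funext i; simp

/-- The Laplacian of the dual graph `G`, with edge weights `edgeMult`. -/
def lapG (M : ModelData V E PtX) : (V → ℤ) →+ (V → ℤ) where
  toFun f := fun v =>
    ∑ e : E,
      ((if (M.ends e).1 = v then (M.edgeMult e : ℤ) * (f (M.ends e).1 - f (M.ends e).2) else 0) +
       (if (M.ends e).2 = v then (M.edgeMult e : ℤ) * (f (M.ends e).2 - f (M.ends e).1) else 0))
  map_zero' := by funext v; simp
  map_add' f g := by
    funext v
    simp only [Pi.add_apply, ← Finset.sum_add_distrib]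
    refine Finset.sum_congr rfl fun e _ => ?_
    split_ifs <;> ring

/-- The group of principal divisors on the dual graph (generated by chip-firing
moves). -/
def PrinG (M : ModelData V E PtX) : AddSubgroup (V → ℤ) := M.lapG.range

/-- The degree of a divisor on `X`: `deg (∑ aₓ [x]) = ∑ aₓ [k(x) : K]`. -/
noncomputable def degX (M : ModelData V E PtX) : (PtX →₀ ℤ) →+ ℤ :=
  Finsupp.liftAddHom fun x => AddMonoidHom.mulRight (M.ptDeg x : ℤ)

end ModelData

section AuxPrinSpec
open ModelData
variable {V E PtX : Type} [Fintype V] [Fintype E] [DecidableEq V]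

variable {V E PtX : Type} [Fintype V] [Fintype E] [DecidableEq V]

lemma aux_ne (M : ModelData V E PtX)
    (hnode : ∀ i j, i ≠ j → M.pair i (0, Pi.single j 1) =
      ∑ e : E, if M.ends e = (i, j) ∨ M.ends e = (j, i) then (M.edgeMult e : ℤ) else 0)
    (i j : V) (hij : i ≠ j) :
    M.pair i (0, Pi.single j 1) + M.lapG (Pi.single j 1) i = 0 := by
  rw [hnode i j hij]
  show _ + ∑ e : E, _ = 0
  rw [← Finset.sum_add_distrib]
  rw [Finset.sum_eq_zero]
  intro e _
  rcases he : M.ends e with ⟨a, b⟩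
  simp only [he, Prod.mk.injEq, Pi.single_apply]
  split_ifs <;> simp_all

lemma aux_eq (M : ModelData V E PtX)
    (hnode : ∀ i j, i ≠ j → M.pair i (0, Pi.single j 1) =
      ∑ e : E, if M.ends e = (i, j) ∨ M.ends e = (j, i) then (M.edgeMult e : ℤ) else 0)
    (hfib : ∀ i, M.pair i (0, fun _ => 1) = 0) (i : V) :
    M.pair i (0, Pi.single i 1) + M.lapG (Pi.single i 1) i = 0 := by
  set Φ : (V → ℤ) →+ ℤ := (M.pair i).comp (AddMonoidHom.inr (PtX →₀ ℤ) (V → ℤ)) with hΦ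
  have hΦa : ∀ w, Φ w = M.pair i (0, w) := fun w => rfl
  have h1 : Φ (Pi.single i 1) + ∑ j ∈ Finset.univ.erase i, Φ (Pi.single j 1) = 0 := by
    rw [Finset.add_sum_erase _ (fun j => Φ (Pi.single j 1)) (Finset.mem_univ i),
      ← map_sum]
    have : (∑ j : V, Pi.single j (1:ℤ)) = fun _ => 1 := by
      funext v; simp [Finset.sum_apply, Pi.single_apply]
    rw [this, hΦa, hfib]
  have h2 : ∑ j ∈ Finset.univ.erase i, Φ (Pi.single j 1) = M.lapG (Pi.single i 1) i := by
    have hrw : ∀ j ∈ Finset.univ.erase i, Φ (Pi.single j 1) =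
        ∑ e : E, if M.ends e = (i, j) ∨ M.ends e = (j, i) then (M.edgeMult e : ℤ) else 0 := by
      intro j hj
      rw [hΦa, hnode i j (Ne.symm (Finset.mem_erase.mp hj).1)]
    rw [Finset.sum_congr rfl hrw, Finset.sum_comm]
    show _ = ∑ e : E, _
    refine Finset.sum_congr rfl fun e _ => ?_
    rcases he : M.ends e with ⟨a, b⟩
    simp only [he, Prod.mk.injEq, Pi.single_apply]
    by_cases ha : a = i <;> by_cases hb : b = i
    · subst ha; subst hb
      simp
    · subst ha
      have : ∀ j ∈ Finset.univ.erase a, (if (a = a ∧ b = j) ∨ (a = j ∧ b = a) then (M.edgeMult e : ℤ) else 0)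
          = if j = b then (M.edgeMult e : ℤ) else 0 := by
        intro j hj
        have hji : j ≠ a := (Finset.mem_erase.mp hj).1
        by_cases hjb : j = b
        · simp [hjb]
        · simp [hjb, Ne.symm hji, Ne.symm hjb]
      rw [Finset.sum_congr rfl this, Finset.sum_ite_eq']
      simp [Finset.mem_erase, hb]
    · subst hb
      have : ∀ j ∈ Finset.univ.erase b, (if (a = b ∧ b = j) ∨ (a = j ∧ b = b) then (M.edgeMult e : ℤ) else 0)
          = if j = a then (M.edgeMult e : ℤ) else 0 := by
        intro j hj
        have hji : j ≠ b := (Finset.mem_erase.mp hj).1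
        by_cases hja : j = a
        · simp [hja]
        · simp [hja, Ne.symm hji, Ne.symm hja]
      rw [Finset.sum_congr rfl this, Finset.sum_ite_eq']
      simp [Finset.mem_erase, ha]
    · rw [Finset.sum_eq_zero]
      · simp [ha, hb]
      · intro j hj
        simp [ha, hb]
  rw [← hΦa, ← h2]
  linarith [h1]

lemma aux_single (M : ModelData V E PtX)
    (hnode : ∀ i j, i ≠ j → M.pair i (0, Pi.single j 1) =
      ∑ e : E, if M.ends e = (i, j) ∨ M.ends e = (j, i) then (M.edgeMult e : ℤ) else 0)
    (hfib : ∀ i, M.pair i (0, fun _ => 1) = 0) (i j : V) :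
    M.pair i (0, Pi.single j 1) + M.lapG (Pi.single j 1) i = 0 := by
  by_cases hij : i = j
  · subst hij; exact aux_eq M hnode hfib i
  · exact aux_ne M hnode i j hij

lemma rho_vert (M : ModelData V E PtX)
    (hnode : ∀ i j, i ≠ j → M.pair i (0, Pi.single j 1) =
      ∑ e : E, if M.ends e = (i, j) ∨ M.ends e = (j, i) then (M.edgeMult e : ℤ) else 0)
    (hfib : ∀ i, M.pair i (0, fun _ => 1) = 0) (w : V → ℤ) (i : V) :
    M.rho (0, w) i = - M.lapG w i := by
  set Φ : (V → ℤ) →+ ℤ := (M.pair i).comp (AddMonoidHom.inr (PtX →₀ ℤ) (V → ℤ)) with hΦ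
  set Ψ : (V → ℤ) →+ ℤ := (Pi.evalAddMonoidHom (fun _ : V => ℤ) i).comp M.lapG with hΨ
  have key : Φ + Ψ = 0 := by
    apply AddMonoidHom.functions_ext
    intro j x
    have hx : Pi.single j x = x • (Pi.single j (1 : ℤ) : V → ℤ) := by
      funext v
      simp only [Pi.smul_apply, Pi.single_apply, smul_eq_mul]
      split <;> simp
    rw [hx, map_zsmul, AddMonoidHom.zero_apply]
    have h0 : (Φ + Ψ) (Pi.single j (1:ℤ)) = 0 := aux_single M hnode hfib i j
    rw [h0, smul_zero]
  have := DFunLike.congr_fun key w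
  have hΦw : Φ w = M.rho (0, w) i := rfl
  have hΨw : Ψ w = M.lapG w i := rfl
  simp only [AddMonoidHom.add_apply, AddMonoidHom.zero_apply, hΦw, hΨw] at this
  linarith

end AuxPrinSpec

open ModelData in
/-- For a regular semistable model `𝔛` as encoded by `M`, assuming
invariance of the intersection pairing under linear equivalence (`hlin`), the node
description of `C i · C j` (`hnode`), `C i · 𝔛ₖ = 0` (`hfib`), and the moving lemma
(`hmoving`: every vertical divisor is linearly equivalent on `𝔛` to a horizontal
divisor), the specialization map `ρ` restricted to vertical divisors surjects onto
`Prin(G)`, and `ρ` maps `Prin(X)` (the horizontal parts of principal divisors on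
`𝔛`) surjectively onto `Prin(G)`. -/
theorem prin_specializes_onto_pring {V E PtX : Type} [Fintype V] [Fintype E] [DecidableEq V]
    (M : ModelData V E PtX)
    (hlin : ∀ P ∈ M.Prin, ∀ D i, M.pair i (D + P) = M.pair i D)
    (hnode : ∀ i j, i ≠ j → M.pair i (0, Pi.single j 1) =
      ∑ e : E, if M.ends e = (i, j) ∨ M.ends e = (j, i) then (M.edgeMult e : ℤ) else 0)
    (hfib : ∀ i, M.pair i (0, fun _ => 1) = 0)
    (hmoving : ∀ w : V → ℤ, ∃ Dh : PtX →₀ ℤ, ((Dh, 0) - ((0 : PtX →₀ ℤ), w)) ∈ M.Prin) :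
    ((∀ w : V → ℤ, M.rho (0, w) ∈ M.PrinG) ∧
     (∀ g ∈ M.PrinG, ∃ w : V → ℤ, M.rho (0, w) = g)) ∧
    ((∀ P ∈ M.Prin, M.rho (P.1, 0) ∈ M.PrinG) ∧
     (∀ g ∈ M.PrinG, ∃ P ∈ M.Prin, M.rho (P.1, 0) = g)) := by
  have key : ∀ (w : V → ℤ) (i : V), M.rho (0, w) i = - M.lapG w i :=
    rho_vert M hnode hfib
  have hvmem : ∀ w : V → ℤ, M.rho (0, w) ∈ M.PrinG := by
    intro w
    refine ⟨-w, ?_⟩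
    funext i
    rw [map_neg]
    simp only [Pi.neg_apply]
    rw [key]
  have hvsurj : ∀ g ∈ M.PrinG, ∃ w : V → ℤ, M.rho (0, w) = g := by
    rintro g ⟨f, rfl⟩
    refine ⟨-f, ?_⟩
    funext i
    rw [key, map_neg]
    simp
  have hrhoP : ∀ P ∈ M.Prin, M.rho P = 0 := by
    intro P hP
    funext i
    have := hlin P hP 0 i
    rw [zero_add] at this
    simpa [ModelData.rho] using this
  have hsplit : ∀ P : (PtX →₀ ℤ) × (V → ℤ), ((P.1, 0) : (PtX →₀ ℤ) × (V → ℤ)) = P - (0, P.2) := by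
    intro P
    ext <;> simp
  refine ⟨⟨hvmem, hvsurj⟩, ?_, ?_⟩
  · intro P hP
    rw [hsplit P, map_sub, hrhoP P hP, zero_sub]
    exact neg_mem (hvmem P.2)
  · intro g hg
    obtain ⟨w, hw⟩ := hvsurj g hg
    obtain ⟨Dh, hP⟩ := hmoving w
    refine ⟨(Dh, 0) - ((0 : PtX →₀ ℤ), w), hP, ?_⟩
    have h1 : ((Dh, 0) - ((0 : PtX →₀ ℤ), w)).1 = Dh := by simp
    rw [h1]
    have h2 : ((Dh, (0 : V → ℤ)) : (PtX →₀ ℤ) × (V → ℤ)) = ((Dh, 0) - ((0 : PtX →₀ ℤ), w)) + (0, w) := by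
      ext <;> simp
    rw [h2, map_add, hrhoP _ hP, zero_add, hw]
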